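/- arXiv:2306.10659 — 2 statements merged into one kernel-verified Lean document; each statement's English description precedes it below -/
import Mathlib

section
/- Let μ ∈ ℝ, σ > 0, λ > 0 with μ + σ²/2 = 0, let K > 0, and let θ₁ = (-μ + √(μ² + 2λσ²))/σ², θ₂ = (-μ - √(μ² + 2λσ²))/σ². Define m(x) = (K/(λ(θ₁-θ₂))) e^{θ₁(x - log K)} - e^x/λ + K/λ for x ≤ log K and m(x) = (K/(λ(θ₁-θ₂))) e^{θ₂(x - log K)} for x > log K. Then m is continuously differentiable on ℝ, and on each of the regions {x < log K} and {x > log K} it satisfies λ m(x) - (K - e^x)⁺ = μ m'(x) + (σ²/2) m''(x). -/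
open Real

/-- The piecewise function `m` (Laplace transform of the put price under BM with drift)
is `C¹` on `ℝ` and satisfies `λm - (K - eˣ)⁺ = μm' + (σ²/2)m''` off `x = log K`. -/
theorem laplace_put_solves_ode (μ σ lam K : ℝ) (hσ : 0 < σ) (hlam : 0 < lam)
    (hK : 0 < K) (hmart : μ + σ ^ 2 / 2 = 0) :
    let θ₁ : ℝ := (-μ + Real.sqrt (μ ^ 2 + 2 * lam * σ ^ 2)) / σ ^ 2
    let θ₂ : ℝ := (-μ - Real.sqrt (μ ^ 2 + 2 * lam * σ ^ 2)) / σ ^ 2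
    let m : ℝ → ℝ := fun x =>
      if x ≤ Real.log K then
        K / (lam * (θ₁ - θ₂)) * Real.exp (θ₁ * (x - Real.log K))
          - Real.exp x / lam + K / lam
      else K / (lam * (θ₁ - θ₂)) * Real.exp (θ₂ * (x - Real.log K))
    ContDiff ℝ 1 m ∧
      ∀ x : ℝ, x ≠ Real.log K →
        lam * m x - max (K - Real.exp x) 0
          = μ * deriv m x + σ ^ 2 / 2 * deriv (deriv m) x := by
  intro θ₁ θ₂ m
  have hσ2 : (σ : ℝ) ^ 2 ≠ 0 := by positivity
  have hlam0 : lam ≠ 0 := hlam.ne'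
  have hinv : lam * lam⁻¹ = 1 := mul_inv_cancel₀ hlam0
  set b : ℝ := Real.log K with hbdef
  set s : ℝ := Real.sqrt (μ ^ 2 + 2 * lam * σ ^ 2) with hsdef
  have hspos : 0 < s := Real.sqrt_pos.mpr (by positivity)
  have hs2 : s ^ 2 = μ ^ 2 + 2 * lam * σ ^ 2 := Real.sq_sqrt (by positivity)
  have hθd : θ₁ - θ₂ = 2 * s / σ ^ 2 := by
    show (-μ + s) / σ ^ 2 - (-μ - s) / σ ^ 2 = 2 * s / σ ^ 2
    ring
  have hθdpos : 0 < θ₁ - θ₂ := by rw [hθd]; positivity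
  set C : ℝ := K / (lam * (θ₁ - θ₂)) with hCdef
  have hCθ : C * (θ₁ - θ₂) = K / lam := by
    rw [hCdef]; field_simp
  have hq1 : σ ^ 2 / 2 * θ₁ ^ 2 + μ * θ₁ = lam := by
    show σ ^ 2 / 2 * ((-μ + s) / σ ^ 2) ^ 2 + μ * ((-μ + s) / σ ^ 2) = lam
    field_simp
    nlinarith [hs2]
  have hq2 : σ ^ 2 / 2 * θ₂ ^ 2 + μ * θ₂ = lam := by
    show σ ^ 2 / 2 * ((-μ - s) / σ ^ 2) ^ 2 + μ * ((-μ - s) / σ ^ 2) = lam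
    field_simp
    nlinarith [hs2]
  have hexpb : Real.exp b = K := Real.exp_log hK
  -- the two smooth pieces and their derivatives
  set f : ℝ → ℝ := fun x => C * Real.exp (θ₁ * (x - b)) - Real.exp x / lam + K / lam
    with hfdef
  set g : ℝ → ℝ := fun x => C * Real.exp (θ₂ * (x - b)) with hgdef
  have hm : ∀ x, m x = if x ≤ b then f x else g x := fun x => rfl
  have hlin : ∀ (θ x : ℝ), HasDerivAt (fun y => θ * (y - b)) θ x := by
    intro θ x
    simpa using ((hasDerivAt_id x).sub_const b).const_mul θ
  have hf' : ∀ x, HasDerivAt f (C * θ₁ * Real.exp (θ₁ * (x - b)) - Real.exp x / lam) x := by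
    intro x
    have h2 := ((hlin θ₁ x).exp).const_mul C
    have h3 := (Real.hasDerivAt_exp x).div_const lam
    have := (h2.sub h3).add_const (K / lam)
    exact this.congr_deriv (by ring)
  have hg' : ∀ x, HasDerivAt g (C * θ₂ * Real.exp (θ₂ * (x - b))) x := by
    intro x
    have h2 := ((hlin θ₂ x).exp).const_mul C
    exact h2.congr_deriv (by ring)
  have hf'' : ∀ x, HasDerivAt (fun y => C * θ₁ * Real.exp (θ₁ * (y - b)) - Real.exp y / lam)
      (C * θ₁ ^ 2 * Real.exp (θ₁ * (x - b)) - Real.exp x / lam) x := by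
    intro x
    have h2 := ((hlin θ₁ x).exp).const_mul (C * θ₁)
    have h3 := (Real.hasDerivAt_exp x).div_const lam
    exact (h2.sub h3).congr_deriv (by ring)
  have hg'' : ∀ x, HasDerivAt (fun y => C * θ₂ * Real.exp (θ₂ * (y - b)))
      (C * θ₂ ^ 2 * Real.exp (θ₂ * (x - b))) x := by
    intro x
    have h2 := ((hlin θ₂ x).exp).const_mul (C * θ₂)
    exact h2.congr_deriv (by ring)
  -- the candidate first derivative
  set D : ℝ → ℝ := fun x => if x ≤ b then
      C * θ₁ * Real.exp (θ₁ * (x - b)) - Real.exp x / lam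
    else C * θ₂ * Real.exp (θ₂ * (x - b)) with hDdef
  have hDle : ∀ x, x ≤ b → D x = C * θ₁ * Real.exp (θ₁ * (x - b)) - Real.exp x / lam := by
    intro x hx; simp only [hDdef]; rw [if_pos hx]
  have hDgt : ∀ x, b < x → D x = C * θ₂ * Real.exp (θ₂ * (x - b)) := by
    intro x hx; simp only [hDdef]; rw [if_neg (not_le.mpr hx)]
  have hmatch : f b = g b := by
    simp only [hfdef, hgdef, sub_self, mul_zero, Real.exp_zero, mul_one, hexpb]
    ring
  have hmatch' : C * θ₁ * Real.exp (θ₁ * (b - b)) - Real.exp b / lam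
      = C * θ₂ * Real.exp (θ₂ * (b - b)) := by
    simp only [sub_self, mul_zero, Real.exp_zero, mul_one, hexpb]
    linarith [hCθ]
  have hmg : ∀ y, b ≤ y → m y = g y := by
    intro y hy
    rcases eq_or_lt_of_le hy with h | h
    · rw [hm y, if_pos (le_of_eq h.symm), ← h, hmatch]
    · rw [hm y, if_neg (not_le.mpr h)]
  have hD : ∀ x, HasDerivAt m (D x) x := by
    intro x
    rcases lt_trichotomy x b with hx | hx | hx
    · have heq : m =ᶠ[nhds x] f := by
        filter_upwards [Iio_mem_nhds hx] with y hy
        rw [hm y, if_pos (le_of_lt hy)]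
      have := (hf' x).congr_of_eventuallyEq heq
      rw [hDle x hx.le]
      exact this
    · subst hx
      have h1 : HasDerivWithinAt m (C * θ₁ * Real.exp (θ₁ * (b - b)) - Real.exp b / lam)
          (Set.Iic b) b := by
        refine ((hf' b).hasDerivWithinAt).congr (fun y hy => ?_) ?_
        · rw [hm y, if_pos (Set.mem_Iic.mp hy)]
        · rw [hm b, if_pos le_rfl]
      have h2 : HasDerivWithinAt m (C * θ₁ * Real.exp (θ₁ * (b - b)) - Real.exp b / lam)
          (Set.Ici b) b := by
        rw [hmatch']
        exact ((hg' b).hasDerivWithinAt).congr (fun y hy => hmg y hy) (hmg b le_rfl)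
      have h3 := h1.union h2
      rw [Set.Iic_union_Ici] at h3
      have h4 := hasDerivWithinAt_univ.mp h3
      rw [hDle b le_rfl]
      exact h4
    · have heq : m =ᶠ[nhds x] g := by
        filter_upwards [Ioi_mem_nhds hx] with y hy
        exact hmg y hy.le
      have := (hg' x).congr_of_eventuallyEq heq
      rw [hDgt x hx]
      exact this
  have hderiv : deriv m = D := funext fun x => (hD x).deriv
  have hDcont : Continuous D := by
    rw [hDdef]
    refine Continuous.if_le ?_ ?_ continuous_id continuous_const ?_
    · exact (continuous_const.mul ((continuous_const.mul
        (continuous_id.sub continuous_const)).rexp)).sub (Real.continuous_exp.div_const lam)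
    · exact continuous_const.mul ((continuous_const.mul
        (continuous_id.sub continuous_const)).rexp)
    · intro y hy
      subst hy
      exact hmatch'
  constructor
  · rw [contDiff_one_iff_deriv]
    exact ⟨fun x => (hD x).differentiableAt, hderiv ▸ hDcont⟩
  · intro x hx
    rcases lt_or_gt_of_ne hx with hxb | hxb
    · -- x < log K
      have hmx : m x = C * Real.exp (θ₁ * (x - b)) - Real.exp x / lam + K / lam := by
        rw [hm x, if_pos hxb.le]
      have hd1 : deriv m x = C * θ₁ * Real.exp (θ₁ * (x - b)) - Real.exp x / lam := by
        rw [hderiv, hDle x hxb.le]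
      have hd2 : deriv (deriv m) x = C * θ₁ ^ 2 * Real.exp (θ₁ * (x - b)) - Real.exp x / lam := by
        rw [hderiv]
        have heq : D =ᶠ[nhds x]
            (fun y => C * θ₁ * Real.exp (θ₁ * (y - b)) - Real.exp y / lam) := by
          filter_upwards [Iio_mem_nhds hxb] with y hy
          exact hDle y (le_of_lt hy)
        exact ((hf'' x).congr_of_eventuallyEq heq).deriv
      have hmax : max (K - Real.exp x) 0 = K - Real.exp x := by
        have : Real.exp x < K := by
          rw [← hexpb]; exact Real.exp_lt_exp.mpr hxb
        exact max_eq_left (by linarith)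
      rw [hmx, hd1, hd2, hmax]
      linear_combination (-(C * Real.exp (θ₁ * (x - b)))) * hq1
        + (Real.exp x / lam) * hmart + (K - Real.exp x) * hinv
    · -- x > log K
      have hmx : m x = C * Real.exp (θ₂ * (x - b)) := hmg x hxb.le
      have hd1 : deriv m x = C * θ₂ * Real.exp (θ₂ * (x - b)) := by
        rw [hderiv, hDgt x hxb]
      have hd2 : deriv (deriv m) x = C * θ₂ ^ 2 * Real.exp (θ₂ * (x - b)) := by
        rw [hderiv]
        have heq : D =ᶠ[nhds x] (fun y => C * θ₂ * Real.exp (θ₂ * (y - b))) := by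
          filter_upwards [Ioi_mem_nhds hxb] with y hy
          exact hDgt y hy
        exact ((hg'' x).congr_of_eventuallyEq heq).deriv
      have hmax : max (K - Real.exp x) 0 = 0 := by
        have : K < Real.exp x := by
          rw [← hexpb]; exact Real.exp_lt_exp.mpr hxb
        exact max_eq_right (by linarith)
      rw [hmx, hd1, hd2, hmax]
      linear_combination (-(C * Real.exp (θ₂ * (x - b)))) * hq2
end

section
/- Let u: [0,∞) → ℝ be measurable with 0 ≤ u ≤ K, let m(λ) = ∫_0^∞ u(s) e^{-λs} ds, and let 0 < α < 1. Then the fractional derivative D^α_λ m(λ) = (1/Γ(1-α)) d/dλ ∫_λ^∞ (r-λ)^{-α} m(r) dr equals -∫_0^∞ u(s) s^α e^{-λs} ds for every λ > 0. -/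
open MeasureTheory Real Set

lemma aux_int_rpow_exp {c b : ℝ} (hc : -1 < c) (hb : 0 < b) :
    IntegrableOn (fun t : ℝ => t ^ c * Real.exp (-b * t)) (Ioi 0) := by
  have := integrableOn_rpow_mul_exp_neg_mul_rpow hc zero_lt_one hb
  simpa [Real.rpow_one] using this

lemma aux_shift_Ioi (f : ℝ → ℝ) (l : ℝ) :
    ∫ r in Ioi l, f r = ∫ t in Ioi 0, f (t + l) := by
  rw [← integral_indicator measurableSet_Ioi, ← integral_indicator measurableSet_Ioi,
    ← integral_add_right_eq_self (fun r => (Ioi l).indicator f r) l]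
  congr 1
  ext t
  have key : l < t + l ↔ 0 < t := by constructor <;> intro h <;> linarith
  by_cases ht : 0 < t
  · simp [indicator, ht, key.mpr ht]
  · simp [indicator, ht, fun h => ht (key.mp h)]

lemma aux_shift_Ioi_integrable {f : ℝ → ℝ} (l : ℝ) (hmeas : Measurable f)
    (h : IntegrableOn (fun t => f (t + l)) (Ioi 0)) : IntegrableOn f (Ioi l) := by
  rw [← integrable_indicator_iff measurableSet_Ioi]
  have hmp : MeasurePreserving (fun t : ℝ => t + l) volume volume :=
    measurePreserving_add_right volume l
  rw [← hmp.integrable_comp ((hmeas.indicator measurableSet_Ioi).aestronglyMeasurable)]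
  have : ((Ioi l).indicator f) ∘ (fun t : ℝ => t + l)
      = (Ioi 0).indicator (fun t => f (t + l)) := by
    ext t
    have key : l < t + l ↔ 0 < t := by constructor <;> intro h <;> linarith
    by_cases ht : 0 < t
    · simp [indicator, ht, Function.comp, key.mpr ht]
    · simp [indicator, ht, Function.comp, fun h => ht (key.mp h)]
  rw [this]
  rwa [integrable_indicator_iff measurableSet_Ioi]

lemma aux_inner_val {α : ℝ} (hα₀ : 0 < α) (hα₁ : α < 1) {s : ℝ} (hs : 0 < s) (l : ℝ) :
    ∫ r in Ioi l, (r - l) ^ (-α) * Real.exp (-r * s)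
      = Real.Gamma (1 - α) * (s ^ (α - 1) * Real.exp (-l * s)) := by
  rw [aux_shift_Ioi (fun r => (r - l) ^ (-α) * Real.exp (-r * s)) l]
  have h1 : ∀ t ∈ Ioi (0:ℝ), (t + l - l) ^ (-α) * Real.exp (-(t + l) * s)
      = Real.exp (-l * s) * (t ^ ((1 - α) - 1) * Real.exp (-(s * t))) := by
    intro t ht
    have : t + l - l = t := by ring
    rw [this]
    rw [show (1 - α) - 1 = -α by ring]
    rw [show -(t + l) * s = -(s * t) + (-l * s) by ring, Real.exp_add]
    ring
  rw [setIntegral_congr_fun measurableSet_Ioi h1, integral_const_mul,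
    integral_rpow_mul_exp_neg_mul_Ioi (by linarith : (0:ℝ) < 1 - α) hs]
  rw [one_div, Real.inv_rpow hs.le, ← Real.rpow_neg hs.le, show -(1-α) = α - 1 by ring]
  ring

lemma aux_inner_integrable {α : ℝ} (hα₀ : 0 < α) (hα₁ : α < 1) {s : ℝ} (hs : 0 < s) (l : ℝ) :
    IntegrableOn (fun r => (r - l) ^ (-α) * Real.exp (-r * s)) (Ioi l) := by
  apply aux_shift_Ioi_integrable l
  · exact ((measurable_id.sub_const l).pow measurable_const).mul (measurable_id.neg.mul_const s).exp
  · have h : IntegrableOn (fun t : ℝ => Real.exp (-l * s) * (t ^ (-α) * Real.exp (-s * t))) (Ioi 0) :=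
      (aux_int_rpow_exp (by linarith : (-1:ℝ) < -α) hs).const_mul _
    apply h.congr_fun ?_ measurableSet_Ioi
    intro t ht
    dsimp only
    have h1 : t + l - l = t := by ring
    rw [h1, show -(t + l) * s = -s * t + (-l * s) by ring, Real.exp_add]
    ring

set_option maxHeartbeats 1000000 in
lemma aux_fubini (K α : ℝ) (hα₀ : 0 < α) (hα₁ : α < 1)
    (u : ℝ → ℝ) (hmeas : Measurable u) (hbdd : ∀ s : ℝ, u s ∈ Icc 0 K)
    {l : ℝ} (hl : 0 < l) :
    ∫ r in Ioi l, (r - l) ^ (-α) * (∫ s in Ioi 0, u s * Real.exp (-r * s))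
      = Real.Gamma (1 - α) * ∫ s in Ioi 0, u s * s ^ (α - 1) * Real.exp (-l * s) := by
  have hu0 : ∀ s, 0 ≤ u s := fun s => (hbdd s).1
  have huK : ∀ s, u s ≤ K := fun s => (hbdd s).2
  set m : ℝ → ℝ := fun r => ∫ s in Ioi 0, u s * Real.exp (-r * s) with hm
  have hm_nonneg : ∀ r, 0 ≤ m r := fun r =>
    setIntegral_nonneg measurableSet_Ioi fun s _ => mul_nonneg (hu0 s) (Real.exp_pos _).le
  have hI1 : ∀ {b : ℝ}, 0 < b → IntegrableOn (fun s => u s * Real.exp (-b * s)) (Ioi 0) := by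
    intro b hb
    refine Integrable.mono ((exp_neg_integrableOn_Ioi 0 hb).const_mul K)
      ((hmeas.mul ((measurable_id.const_mul (-b)).exp)).aestronglyMeasurable) ?_
    · refine ae_of_all _ fun s => ?_
      rw [Real.norm_eq_abs, Real.norm_eq_abs, abs_of_nonneg (mul_nonneg (hu0 s) (Real.exp_pos _).le),
        abs_of_nonneg (mul_nonneg (le_trans (hu0 0) (huK 0)) (Real.exp_pos _).le)]
      exact mul_le_mul_of_nonneg_right (huK s) (Real.exp_pos _).le
  have hm_meas : Measurable m := by
    have hsm : StronglyMeasurable (fun p : ℝ × ℝ => u p.2 * Real.exp (-p.1 * p.2)) :=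
      ((hmeas.comp measurable_snd).mul ((measurable_fst.neg.mul measurable_snd).exp)).stronglyMeasurable
    exact hsm.integral_prod_right'.measurable
  -- Step A
  have hA : ∫ r in Ioi l, (r - l) ^ (-α) * m r
      = (∫⁻ r in Ioi l, ENNReal.ofReal ((r - l) ^ (-α) * m r)).toReal := by
    apply integral_eq_lintegral_of_nonneg_ae
    · refine (ae_restrict_iff' measurableSet_Ioi).2 (ae_of_all _ fun r hr => ?_)
      exact mul_nonneg (Real.rpow_nonneg (by simp only [mem_Ioi] at hr; linarith) _) (hm_nonneg r)
    · exact (((measurable_id.sub_const l).pow measurable_const).mul hm_meas).aestronglyMeasurable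
  -- Step B
  have hB : ∫⁻ r in Ioi l, ENNReal.ofReal ((r - l) ^ (-α) * m r)
      = ∫⁻ r in Ioi l, ∫⁻ s in Ioi 0,
          ENNReal.ofReal ((r - l) ^ (-α) * (u s * Real.exp (-r * s))) := by
    refine setLIntegral_congr_fun measurableSet_Ioi (fun r hr => ?_)
    have hr0 : 0 < r := lt_trans hl hr
    have hrl : (0:ℝ) ≤ r - l := by simp only [mem_Ioi] at hr; linarith
    rw [ENNReal.ofReal_mul (Real.rpow_nonneg hrl _), hm,
      ofReal_integral_eq_lintegral_ofReal (hI1 hr0)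
        (ae_of_all _ fun s => mul_nonneg (hu0 s) (Real.exp_pos _).le),
      ← lintegral_const_mul' _ _ ENNReal.ofReal_ne_top]
    exact lintegral_congr fun s => (ENNReal.ofReal_mul (Real.rpow_nonneg hrl _)).symm
  -- Step C : swap
  have hC : ∫⁻ r in Ioi l, ∫⁻ s in Ioi 0,
          ENNReal.ofReal ((r - l) ^ (-α) * (u s * Real.exp (-r * s)))
      = ∫⁻ s in Ioi 0, ∫⁻ r in Ioi l,
          ENNReal.ofReal ((r - l) ^ (-α) * (u s * Real.exp (-r * s))) := by
    apply lintegral_lintegral_swap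
    exact (ENNReal.measurable_ofReal.comp
      (((measurable_fst.sub_const l).pow measurable_const).mul
        ((hmeas.comp measurable_snd).mul ((measurable_fst.neg.mul measurable_snd).exp)))).aemeasurable
  -- Step D : inner value
  have hD : ∫⁻ s in Ioi 0, ∫⁻ r in Ioi l,
          ENNReal.ofReal ((r - l) ^ (-α) * (u s * Real.exp (-r * s)))
      = ∫⁻ s in Ioi 0,
          ENNReal.ofReal (u s * (Real.Gamma (1 - α) * (s ^ (α - 1) * Real.exp (-l * s)))) := by
    refine setLIntegral_congr_fun measurableSet_Ioi (fun s hs => ?_)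
    have hs0 : 0 < s := hs
    have hrw : (fun r => (r - l) ^ (-α) * (u s * Real.exp (-r * s)))
        = fun r => u s * ((r - l) ^ (-α) * Real.exp (-r * s)) := by
      funext r; ring
    have hint : IntegrableOn (fun r => (r - l) ^ (-α) * (u s * Real.exp (-r * s))) (Ioi l) := by
      rw [hrw]; exact (aux_inner_integrable hα₀ hα₁ hs0 l).const_mul _
    have hnn : 0 ≤ᵐ[volume.restrict (Ioi l)]
        fun r => (r - l) ^ (-α) * (u s * Real.exp (-r * s)) := by
      refine (ae_restrict_iff' measurableSet_Ioi).2 (ae_of_all _ fun r hr => ?_)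
      have hrl : (0:ℝ) ≤ r - l := by simp only [mem_Ioi] at hr; linarith
      exact mul_nonneg (Real.rpow_nonneg hrl _) (mul_nonneg (hu0 s) (Real.exp_pos _).le)
    rw [← ofReal_integral_eq_lintegral_ofReal hint hnn, hrw, integral_const_mul,
      aux_inner_val hα₀ hα₁ hs0 l]
  -- Step E
  rw [hA, hB, hC, hD]
  have hE : (∫⁻ s in Ioi 0, ENNReal.ofReal
        (u s * (Real.Gamma (1 - α) * (s ^ (α - 1) * Real.exp (-l * s))))).toReal
      = ∫ s in Ioi 0, u s * (Real.Gamma (1 - α) * (s ^ (α - 1) * Real.exp (-l * s))) := by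
    symm
    apply integral_eq_lintegral_of_nonneg_ae
    · refine (ae_restrict_iff' measurableSet_Ioi).2 (ae_of_all _ fun s hs => ?_)
      exact mul_nonneg (hu0 s) (mul_nonneg (Real.Gamma_pos_of_pos (by linarith)).le
        (mul_nonneg (Real.rpow_nonneg (le_of_lt hs) _) (Real.exp_pos _).le))
    · exact (hmeas.mul (measurable_const.mul ((measurable_id.pow measurable_const).mul
        ((measurable_id.const_mul (-l)).exp)))).aestronglyMeasurable
  rw [hE, ← integral_const_mul]
  refine setIntegral_congr_fun measurableSet_Ioi fun s hs => ?_
  ring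

lemma aux_deriv (K α : ℝ) (hα₀ : 0 < α) (hα₁ : α < 1)
    (u : ℝ → ℝ) (hmeas : Measurable u) (hbdd : ∀ s : ℝ, u s ∈ Icc 0 K)
    {lam : ℝ} (hlam : 0 < lam) :
    HasDerivAt (fun l => ∫ s in Ioi 0, u s * s ^ (α - 1) * Real.exp (-l * s))
      (∫ s in Ioi 0, -(u s * s ^ α * Real.exp (-lam * s))) lam := by
  have hu0 : ∀ s, 0 ≤ u s := fun s => (hbdd s).1
  have huK : ∀ s, u s ≤ K := fun s => (hbdd s).2
  have hK0 : 0 ≤ K := le_trans (hu0 0) (huK 0)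
  have hmain := hasDerivAt_integral_of_dominated_loc_of_deriv_le
    (μ := volume.restrict (Ioi (0:ℝ))) (x₀ := lam)
    (F := fun x s => u s * s ^ (α - 1) * Real.exp (-x * s))
    (F' := fun x s => -(u s * s ^ α * Real.exp (-x * s)))
    (bound := fun s => K * (s ^ α * Real.exp (-(lam/2) * s)))
    (s := Metric.ball lam (lam/2)) (Metric.ball_mem_nhds _ (by positivity))
    (Filter.Eventually.of_forall fun x =>
      ((hmeas.mul (measurable_id.pow measurable_const)).mul
        ((measurable_id.const_mul (-x)).exp)).aestronglyMeasurable)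
    ?hF_int
    (((hmeas.mul (measurable_id.pow measurable_const)).mul
        ((measurable_id.const_mul (-lam)).exp)).neg.aestronglyMeasurable)
    ?h_bound ?bound_int ?h_diff
  · exact hmain.2
  case hF_int =>
    refine Integrable.mono ((aux_int_rpow_exp (by linarith : (-1:ℝ) < α - 1) hlam).const_mul K)
      (((hmeas.mul (measurable_id.pow measurable_const)).mul
        ((measurable_id.const_mul (-lam)).exp)).aestronglyMeasurable) ?_
    refine (ae_restrict_iff' measurableSet_Ioi).2 (ae_of_all _ fun s hs => ?_)
    have hs0 : (0:ℝ) < s := hs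
    rw [Real.norm_eq_abs, Real.norm_eq_abs,
      abs_of_nonneg (mul_nonneg (mul_nonneg (hu0 s) (Real.rpow_nonneg hs0.le _)) (Real.exp_pos _).le),
      abs_of_nonneg (mul_nonneg hK0 (mul_nonneg (Real.rpow_nonneg hs0.le _) (Real.exp_pos _).le))]
    calc u s * s ^ (α - 1) * Real.exp (-lam * s)
        ≤ K * s ^ (α - 1) * Real.exp (-lam * s) := by
          apply mul_le_mul_of_nonneg_right _ (Real.exp_pos _).le
          exact mul_le_mul_of_nonneg_right (huK s) (Real.rpow_nonneg hs0.le _)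
      _ = K * (s ^ (α - 1) * Real.exp (-lam * s)) := by ring
  case h_bound =>
    refine (ae_restrict_iff' measurableSet_Ioi).2 (ae_of_all _ fun s hs x hx => ?_)
    have hs0 : (0:ℝ) < s := hs
    have hx2 : lam / 2 ≤ x := by
      have := abs_lt.1 (by simpa [Real.dist_eq] using Metric.mem_ball.1 hx)
      linarith [this.1]
    rw [norm_neg, Real.norm_eq_abs,
      abs_of_nonneg (mul_nonneg (mul_nonneg (hu0 s) (Real.rpow_nonneg hs0.le _)) (Real.exp_pos _).le)]
    calc u s * s ^ α * Real.exp (-x * s)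
        ≤ K * s ^ α * Real.exp (-x * s) := by
          apply mul_le_mul_of_nonneg_right _ (Real.exp_pos _).le
          exact mul_le_mul_of_nonneg_right (huK s) (Real.rpow_nonneg hs0.le _)
      _ ≤ K * s ^ α * Real.exp (-(lam/2) * s) := by
          apply mul_le_mul_of_nonneg_left _ (mul_nonneg hK0 (Real.rpow_nonneg hs0.le _))
          apply Real.exp_le_exp.2
          nlinarith
      _ = K * (s ^ α * Real.exp (-(lam/2) * s)) := by ring
  case bound_int =>
    exact (aux_int_rpow_exp (by linarith : (-1:ℝ) < α) (by positivity : (0:ℝ) < lam/2)).const_mul K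
  case h_diff =>
    refine (ae_restrict_iff' measurableSet_Ioi).2 (ae_of_all _ fun s hs x _ => ?_)
    have hs0 : (0:ℝ) < s := hs
    have h1 : HasDerivAt (fun x : ℝ => -x * s) (-1 * s) x := ((hasDerivAt_id x).neg.mul_const s)
    have h3 := (h1.exp).const_mul (u s * s ^ (α - 1))
    have hpow : s ^ (α - 1) * s = s ^ α := by
      rw [← Real.rpow_add_one (ne_of_gt hs0) (α - 1)]
      norm_num
    convert h3 using 1
    show -(u s * s ^ α * Real.exp (-x * s)) = _
    rw [← hpow]
    ring
    rfl


/-- Fractional derivative of the Laplace transform: for `0 < α < 1` and `0 ≤ u ≤ K`,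
`D^α_λ m(λ) = -∫_0^∞ u(s) s^α e^{-λs} ds` for every `λ > 0`, where
`D^α_λ f λ = (1/Γ(1-α)) d/dλ ∫_λ^∞ (r-λ)^{-α} f(r) dr`. -/
theorem frac_deriv_laplace (K α : ℝ) (hK : 0 < K) (hα₀ : 0 < α) (hα₁ : α < 1)
    (u : ℝ → ℝ) (hmeas : Measurable u) (hbdd : ∀ s : ℝ, u s ∈ Icc 0 K) :
    let m : ℝ → ℝ := fun lam => ∫ s in Ioi 0, u s * Real.exp (-lam * s)
    ∀ lam : ℝ, 0 < lam →
      (1 / Real.Gamma (1 - α)) *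
          deriv (fun l : ℝ => ∫ r in Ioi l, (r - l) ^ (-α) * m r) lam
        = -∫ s in Ioi 0, u s * s ^ α * Real.exp (-lam * s) := by
  intro m lam hlam
  have hΓ : (0:ℝ) < Real.Gamma (1 - α) := Real.Gamma_pos_of_pos (by linarith)
  have heq : (fun l : ℝ => ∫ r in Ioi l, (r - l) ^ (-α) * m r)
      =ᶠ[nhds lam] (fun l : ℝ => Real.Gamma (1 - α) *
        ∫ s in Ioi 0, u s * s ^ (α - 1) * Real.exp (-l * s)) := by
    filter_upwards [isOpen_Ioi.mem_nhds hlam] with l hl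
    exact aux_fubini K α hα₀ hα₁ u hmeas hbdd hl
  rw [heq.deriv_eq,
    ((aux_deriv K α hα₀ hα₁ u hmeas hbdd hlam).const_mul (Real.Gamma (1 - α))).deriv,
    integral_neg, one_div]
  field_simp
end
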